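/- A ring R is central reduced if and only if R/P(R) is central reduced and P(R) is contained in the center of R, where P(R) is the prime radical. -/

import Mathlib

/-- A ring is central reduced if every nilpotent element is central. -/
def IsCentralReduced (R : Type*) [Ring R] : Prop :=
  ∀ a : R, IsNilpotent a → a ∈ Set.center R

/-- A two-sided ideal `P` of a ring is prime if whenever `a R b ⊆ P`, then
`a ∈ P` or `b ∈ P`. -/
def TwoSidedIdeal.IsPrimeIdeal {R : Type*} [Ring R] (P : TwoSidedIdeal R) : Prop :=
  (P : Set R) ≠ Set.univ ∧ ∀ a b : R, (∀ r : R, a * r * b ∈ P) → a ∈ P ∨ b ∈ P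

/-- The prime radical of a ring, as a two-sided ideal: the infimum of all prime
two-sided ideals. -/
def primeRadical (R : Type*) [Ring R] : TwoSidedIdeal R :=
  sInf {P : TwoSidedIdeal R | P.IsPrimeIdeal}

section aux

variable {R : Type*} [Ring R]

/-- span {a} * span {b} ⊆ P when a R b ⊆ P. -/
lemma span_mul_span_mem (P : TwoSidedIdeal R) (a b : R)
    (h : ∀ r : R, a * r * b ∈ P) :
    ∀ s ∈ TwoSidedIdeal.span {a}, ∀ t ∈ TwoSidedIdeal.span {b}, s * t ∈ P := by
  intro s hs t ht
  rw [TwoSidedIdeal.mem_span_iff_mem_addSubgroup_closure] at hs ht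
  induction hs using AddSubgroup.closure_induction with
  | mem s hs =>
    induction ht using AddSubgroup.closure_induction with
    | mem t ht =>
      obtain ⟨u, hu, v, -, rfl⟩ := hs
      obtain ⟨r₁, -, a', ha', rfl⟩ := hu
      obtain ⟨u', hu', w, -, rfl⟩ := ht
      obtain ⟨r₂, -, b', hb', rfl⟩ := hu'
      rw [Set.mem_singleton_iff] at ha' hb'
      have : r₁ * a' * v * (r₂ * b' * w) = r₁ * (a' * (v * r₂) * b') * w := by
        simp only [mul_assoc]
      rw [this, ha', hb']
      exact P.mul_mem_right _ _ (P.mul_mem_left _ _ (h _))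
    | zero => simpa using P.zero_mem
    | add x y _ _ hx hy => simpa [mul_add] using P.add_mem hx hy
    | neg x _ hx => simpa [mul_neg] using P.neg_mem hx
  | zero => simpa using P.zero_mem
  | add x y _ _ hx hy => simpa [add_mul] using P.add_mem hx hy
  | neg x _ hx => simpa [neg_mul] using P.neg_mem hx

/-- If `x` is not nilpotent, there is a prime two-sided ideal avoiding `x`. -/
lemma exists_prime_not_mem (x : R) (hx : ¬ IsNilpotent x) :
    ∃ P : TwoSidedIdeal R, P.IsPrimeIdeal ∧ x ∉ P := by
  set S : Set (TwoSidedIdeal R) := {I | ∀ n : ℕ, x ^ (n + 1) ∉ I} with hS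
  have hbot : (⊥ : TwoSidedIdeal R) ∈ S := by
    intro n hn
    rw [TwoSidedIdeal.mem_bot] at hn
    exact hx ⟨n + 1, hn⟩
  have hchain : ∀ c ⊆ S, IsChain (· ≤ ·) c → ∀ y ∈ c, ∃ ub ∈ S, ∀ z ∈ c, z ≤ ub := by
    intro c hcS hc y hy
    refine ⟨TwoSidedIdeal.mk' (⋃ I ∈ c, (I : Set R)) ?_ ?_ ?_ ?_ ?_, ?_, ?_⟩
    · exact Set.mem_biUnion hy y.zero_mem
    · rintro u v hu hv
      simp only [Set.mem_iUnion, SetLike.mem_coe] at hu hv ⊢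
      obtain ⟨I, hI, hu⟩ := hu
      obtain ⟨J, hJ, hv⟩ := hv
      rcases hc.total hI hJ with hIJ | hJI
      · exact ⟨J, hJ, J.add_mem (hIJ hu) hv⟩
      · exact ⟨I, hI, I.add_mem hu (hJI hv)⟩
    · rintro u hu
      simp only [Set.mem_iUnion, SetLike.mem_coe] at hu ⊢
      obtain ⟨I, hI, hu⟩ := hu
      exact ⟨I, hI, I.neg_mem hu⟩
    · rintro u v hv
      simp only [Set.mem_iUnion, SetLike.mem_coe] at hv ⊢
      obtain ⟨I, hI, hv⟩ := hv
      exact ⟨I, hI, I.mul_mem_left _ _ hv⟩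
    · rintro u v hu
      simp only [Set.mem_iUnion, SetLike.mem_coe] at hu ⊢
      obtain ⟨I, hI, hu⟩ := hu
      exact ⟨I, hI, I.mul_mem_right _ _ hu⟩
    · intro n hn
      rw [TwoSidedIdeal.mem_mk'] at hn
      simp only [Set.mem_iUnion, SetLike.mem_coe] at hn
      obtain ⟨I, hI, hn⟩ := hn
      exact hcS hI n hn
    · intro z hz
      rw [TwoSidedIdeal.le_iff, TwoSidedIdeal.coe_mk']
      exact fun u hu => Set.mem_biUnion hz hu
  obtain ⟨P, -, hPmax⟩ := zorn_le_nonempty₀ S hchain ⊥ hbot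
  have hPS : P ∈ S := hPmax.1
  have hxP : x ∉ P := by simpa using hPS 0
  refine ⟨P, ⟨?_, ?_⟩, hxP⟩
  · intro h
    exact hxP (show x ∈ (P : Set R) from h ▸ Set.mem_univ x)
  · intro a b hab
    by_contra hcon
    push_neg at hcon
    obtain ⟨ha, hb⟩ := hcon
    have hPa : P ⊔ TwoSidedIdeal.span {a} ∉ S := by
      intro hmem
      have hle : P ⊔ TwoSidedIdeal.span {a} ≤ P := hPmax.2 hmem le_sup_left
      exact ha (hle (TwoSidedIdeal.mem_sup_right
        (TwoSidedIdeal.subset_span (Set.mem_singleton a))))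
    have hPb : P ⊔ TwoSidedIdeal.span {b} ∉ S := by
      intro hmem
      have hle : P ⊔ TwoSidedIdeal.span {b} ≤ P := hPmax.2 hmem le_sup_left
      exact hb (hle (TwoSidedIdeal.mem_sup_right
        (TwoSidedIdeal.subset_span (Set.mem_singleton b))))
    simp only [hS, Set.mem_setOf_eq, not_forall, not_not] at hPa hPb
    obtain ⟨n, hn⟩ := hPa
    obtain ⟨m, hm⟩ := hPb
    rw [TwoSidedIdeal.mem_sup] at hn hm
    obtain ⟨p, hp, s, hsp, hps⟩ := hn
    obtain ⟨q, hq, t, htq, hqt⟩ := hm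
    have hmem : x ^ (n + 1) * x ^ (m + 1) ∈ P := by
      rw [← hps, ← hqt]
      have h1 : (p + s) * (q + t) = p * (q + t) + s * q + s * t := by noncomm_ring
      rw [h1]
      exact P.add_mem (P.add_mem (P.mul_mem_right _ _ hp) (P.mul_mem_left _ _ hq))
        (span_mul_span_mem P a b hab s hsp t htq)
    rw [← pow_add] at hmem
    exact hPS (n + 1 + m) (by rwa [show n + 1 + m + 1 = n + 1 + (m + 1) by ring])

lemma isNilpotent_of_mem_primeRadical {x : R} (hx : x ∈ primeRadical R) :
    IsNilpotent x := by
  by_contra h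
  obtain ⟨P, hP, hxP⟩ := exists_prime_not_mem x h
  rw [primeRadical, TwoSidedIdeal.mem_sInf] at hx
  exact hxP (hx P hP)

lemma mem_prime_of_pow_mem {Q : TwoSidedIdeal R} (hQ : Q.IsPrimeIdeal) {a : R}
    (hcomm : ∀ r : R, a * r - r * a ∈ Q) :
    ∀ k : ℕ, a ^ (k + 1) ∈ Q → a ∈ Q := by
  intro k
  induction k with
  | zero => intro h; simpa using h
  | succ k ih =>
    intro h
    have key : ∀ r : R, a ^ (k + 1) * r * a ∈ Q := by
      intro r
      have h2 : a ^ (k + 1) * (r * a - a * r) + a ^ (k + 1 + 1) * r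
          = a ^ (k + 1) * r * a := by
        rw [pow_succ]
        noncomm_ring
      rw [← h2]
      exact Q.add_mem (Q.mul_mem_left _ _ (by simpa using Q.neg_mem (hcomm r)))
        (Q.mul_mem_right _ _ h)
    rcases hQ.2 _ _ key with h' | h'
    · exact ih h'
    · exact h'

end aux

theorem stmt_9 (R : Type*) [Ring R] :
    IsCentralReduced R ↔
      (IsCentralReduced (primeRadical R).ringCon.Quotient ∧
        (primeRadical R : Set R) ⊆ Set.center R) := by
  set I := primeRadical R with hI
  have hsurj : Function.Surjective (I.ringCon.mk') := Quotient.mk''_surjective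
  constructor
  · intro h
    constructor
    · intro y hy
      obtain ⟨a, rfl⟩ := hsurj y
      obtain ⟨n, hn⟩ := hy
      have han : a ^ n ∈ I := by
        rw [← TwoSidedIdeal.ker_ringCon_mk' I, TwoSidedIdeal.mem_ker, map_pow, hn]
      have hnil : IsNilpotent a := by
        obtain ⟨m, hm⟩ := isNilpotent_of_mem_primeRadical (hI ▸ han)
        exact ⟨n * m, by rw [pow_mul, hm]⟩
      have hac := Semigroup.mem_center_iff.mp (h a hnil)
      rw [Semigroup.mem_center_iff]
      intro g
      obtain ⟨r, rfl⟩ := hsurj g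
      rw [← map_mul, ← map_mul, hac r]
    · intro z hz
      exact h z (isNilpotent_of_mem_primeRadical (hI ▸ hz))
  · rintro ⟨hq, hsub⟩
    intro a ha
    have hqa := Semigroup.mem_center_iff.mp (hq _ (ha.map (I.ringCon.mk')))
    have hcomm : ∀ r : R, a * r - r * a ∈ I := by
      intro r
      rw [← TwoSidedIdeal.ker_ringCon_mk' I, TwoSidedIdeal.mem_ker, map_sub, map_mul,
        map_mul, ← hqa (I.ringCon.mk' r), sub_self]
    have haI : a ∈ I := by
      rw [hI, primeRadical, TwoSidedIdeal.mem_sInf]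
      intro Q hQ
      have hQ' : TwoSidedIdeal.IsPrimeIdeal Q := hQ
      have hcommQ : ∀ r : R, a * r - r * a ∈ Q := by
        intro r
        have h0 : a * r - r * a ∈ primeRadical R := hI ▸ hcomm r
        rw [primeRadical, TwoSidedIdeal.mem_sInf] at h0
        exact h0 Q hQ
      obtain ⟨n, hn⟩ := ha
      rcases n with _ | n
      · exfalso
        apply hQ'.1
        rw [pow_zero] at hn
        have hsub' : Subsingleton R := subsingleton_of_zero_eq_one hn.symm
        ext z
        simp only [Set.mem_univ, iff_true, SetLike.mem_coe]
        rw [Subsingleton.elim z 0]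
        exact Q.zero_mem
      · exact mem_prime_of_pow_mem hQ' hcommQ n (by rw [hn]; exact Q.zero_mem)
    exact hsub haI
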